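/- The barycentric weights for Chebyshev points of the second kind are correct: for nodes s_k = cos(kπ/n), k = 0,…,n, the quantities w_k = 1/∏_{j≠k}(s_k - s_j) satisfy w_k = c·(-1)^k·δ_k where δ_k = 1/2 for k = 0 or k = n and δ_k = 1 otherwise, for some nonzero constant c independent of k. -/

import Mathlib

open Finset
open Polynomial Polynomial.Chebyshev


lemma U_deg_coeff : ∀ m : ℕ, (U ℝ (m:ℤ)).natDegree ≤ m ∧ (U ℝ (m:ℤ)).coeff m = 2^m := by
  intro m
  induction m using Nat.twoStepInduction with
  | zero => simp [U_zero]
  | one =>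
    constructor
    · simpa [U_one] using natDegree_linear_le (a := (2:ℝ)) (b := 0)
    · simp [U_one, coeff_X]
  | more m ih1 ih2 =>
    have h : U ℝ ((m:ℤ) + 2) = 2 * X * U ℝ ((m:ℤ) + 1) - U ℝ (m:ℤ) := U_add_two ℝ m
    have hcast : ((m + 2 : ℕ) : ℤ) = (m : ℤ) + 2 := by push_cast; ring
    have hcast1 : ((m + 1 : ℕ) : ℤ) = (m : ℤ) + 1 := by push_cast; ring
    rw [← hcast1] at h
    obtain ⟨hd1, hc1⟩ := ih2
    obtain ⟨hd0, hc0⟩ := ih1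
    rw [hcast, h]
    have hmul : (2 * X * U ℝ ((m+1 : ℕ):ℤ)).natDegree ≤ m + 2 := by
      refine natDegree_mul_le.trans ?_
      have h2 : (2 * X : ℝ[X]).natDegree ≤ 1 := by
        simpa using natDegree_linear_le (a := (2:ℝ)) (b := 0)
      omega
    constructor
    · exact (natDegree_sub_le _ _).trans (by simp only [max_le_iff]; omega)
    · rw [coeff_sub, coeff_eq_zero_of_natDegree_lt (lt_of_le_of_lt hd0 (by omega)),
        sub_zero, mul_assoc]
      have : ((2:ℝ[X]) * (X * U ℝ ((m+1:ℕ):ℤ))).coeff (m+2) =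
          2 * (X * U ℝ ((m+1:ℕ):ℤ)).coeff (m+2) := by
        simp [coeff_ofNat_mul]
      rw [this, coeff_X_mul, hc1]
      ring



lemma nodes_injOn (n : ℕ) (hn : 1 ≤ n) :
    Set.InjOn (fun k : Fin (n+1) => Real.cos ((k:ℕ) * Real.pi / n)) ↑(univ : Finset (Fin (n+1))) := by
  intro a _ b _ hab
  have hπ := Real.pi_pos
  have hmem : ∀ k : Fin (n+1), ((k:ℕ) * Real.pi / n) ∈ Set.Icc 0 Real.pi := by
    intro k
    have hk : (k:ℕ) ≤ n := Nat.lt_succ_iff.mp k.isLt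
    constructor
    · positivity
    · rw [div_le_iff₀ (by positivity)]
      calc (k:ℝ) * Real.pi ≤ n * Real.pi := by
            apply mul_le_mul_of_nonneg_right (by exact_mod_cast hk) hπ.le
        _ = Real.pi * n := by ring
  have := Real.injOn_cos (hmem a) (hmem b) hab
  have hn0 : (n:ℝ) ≠ 0 := by positivity
  rw [div_left_inj' hn0, mul_left_inj' hπ.ne'] at this
  exact Fin.ext (by exact_mod_cast this)

lemma key_poly (n : ℕ) (hn : 1 ≤ n) :
    (X^2 - 1) * U ℝ ((n:ℤ) - 1) =
      C ((2:ℝ)^(n-1)) *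
        Lagrange.nodal univ (fun k : Fin (n+1) => Real.cos ((k:ℕ) * Real.pi / n)) := by
  set v : Fin (n+1) → ℝ := fun k => Real.cos ((k:ℕ) * Real.pi / n) with hv
  have hcast : (n:ℤ) - 1 = ((n-1 : ℕ) : ℤ) := by omega
  obtain ⟨hUd, hUc⟩ := U_deg_coeff (n-1)
  have hUnd : (U ℝ ((n:ℤ)-1)).natDegree = n - 1 := by
    rw [hcast]
    refine le_antisymm hUd (le_natDegree_of_ne_zero ?_)
    rw [hUc]; positivity
  have hUlc : (U ℝ ((n:ℤ)-1)).leadingCoeff = 2^(n-1) := by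
    rw [leadingCoeff, hUnd, hcast, hUc]
  have hU0 : U ℝ ((n:ℤ)-1) ≠ 0 := by
    intro h
    rw [h, leadingCoeff_zero] at hUlc
    exact absurd hUlc.symm (pow_ne_zero _ two_ne_zero)
  have hX2 : ((X:ℝ[X])^2 - 1).degree = 2 := by
    simpa using degree_X_pow_sub_C (n := 2) (by norm_num) (1:ℝ)
  have hX2ne : ((X:ℝ[X])^2 - 1) ≠ 0 := fun h => by simp [h] at hX2
  have hX2lc : ((X:ℝ[X])^2 - 1).leadingCoeff = 1 := by
    have := monic_X_pow_sub_C (1:ℝ) (n := 2) (by norm_num)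
    simpa using this.leadingCoeff
  have hdegp : ((X^2 - 1) * U ℝ ((n:ℤ)-1)).degree = ((n + 1 : ℕ) : WithBot ℕ) := by
    rw [degree_mul, hX2, degree_eq_natDegree hU0, hUnd]
    norm_cast
    omega
  have hdegq : (C ((2:ℝ)^(n-1)) * Lagrange.nodal univ v).degree = ((n + 1 : ℕ) : WithBot ℕ) := by
    rw [degree_mul, degree_C (by positivity), Lagrange.degree_nodal]
    simp
  refine Polynomial.eq_of_degree_le_of_eval_index_eq univ (nodes_injOn n hn) ?_ ?_ ?_ ?_
  · rw [hdegp]; simp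
  · rw [hdegp, hdegq]
  · rw [leadingCoeff_mul, hX2lc, hUlc, leadingCoeff_mul, leadingCoeff_C,
      (Lagrange.nodal_monic).leadingCoeff]
    ring
  · intro k _
    have hnode : eval (v k) (Lagrange.nodal univ v) = 0 :=
      Lagrange.eval_nodal_at_node (mem_univ k)
    rw [eval_mul, eval_mul, show Real.cos ((k:ℕ) * Real.pi / n) = v k from rfl,
      hnode, mul_zero]
    have h1 := Polynomial.Chebyshev.U_real_cos ((k:ℕ) * Real.pi / n) ((n:ℤ) - 1)
    have hn0 : (n:ℝ) ≠ 0 := by positivity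
    have harg : ((n:ℝ) - 1 + 1) * ((k:ℕ) * Real.pi / n) = (k:ℕ) * Real.pi := by
      field_simp
      ring
    push_cast at h1
    rw [harg] at h1
    have h2 : Real.sin ((k:ℕ) * Real.pi) = 0 := by
      simpa using Real.sin_int_mul_pi (k:ℕ)
    set θ := ((k:ℕ) * Real.pi / n) with hθ
    show eval (Real.cos θ) (X^2 - 1 : ℝ[X]) * eval (Real.cos θ) (U ℝ ((n:ℤ)-1)) = 0
    have h3 : eval (Real.cos θ) (X^2 - 1 : ℝ[X]) = -(Real.sin θ * Real.sin θ) := by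
      have := Real.sin_sq_add_cos_sq θ
      simp only [eval_sub, eval_pow, eval_X, eval_one]
      nlinarith
    rw [h3]
    have h4 : eval (Real.cos θ) (U ℝ ((n:ℤ)-1)) * Real.sin θ = 0 := by rw [h1, h2]
    calc -(Real.sin θ * Real.sin θ) * eval (Real.cos θ) (U ℝ ((n:ℤ)-1))
        = -Real.sin θ * (eval (Real.cos θ) (U ℝ ((n:ℤ)-1)) * Real.sin θ) := by ring
      _ = 0 := by rw [h4, mul_zero]


lemma star_identity (n : ℕ) (hn : 1 ≤ n) (θ : ℝ) :
    eval (Real.cos θ) (derivative (U ℝ ((n:ℤ)-1))) * (-Real.sin θ) * Real.sin θ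
      + eval (Real.cos θ) (U ℝ ((n:ℤ)-1)) * Real.cos θ = n * Real.cos (n * θ) := by
  set p := U ℝ ((n:ℤ)-1)
  have hfun : ∀ t : ℝ, eval (Real.cos t) p * Real.sin t = Real.sin (n * t) := by
    intro t
    have h1 := Polynomial.Chebyshev.U_real_cos t ((n:ℤ) - 1)
    have : ((((n:ℤ) - 1 : ℤ) : ℝ) + 1) * t = n * t := by push_cast; ring
    rwa [this] at h1
  have hf : HasDerivAt (fun t : ℝ => eval (Real.cos t) p * Real.sin t)
      (eval (Real.cos θ) (derivative p) * (-Real.sin θ) * Real.sin θ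
        + eval (Real.cos θ) p * Real.cos θ) θ := by
    have h1 : HasDerivAt (fun t : ℝ => eval (Real.cos t) p)
        (eval (Real.cos θ) (derivative p) * (-Real.sin θ)) θ :=
      (p.hasDerivAt (Real.cos θ)).comp θ (Real.hasDerivAt_cos θ)
    exact h1.mul (Real.hasDerivAt_sin θ)
  have hg : HasDerivAt (fun t : ℝ => Real.sin (n * t)) (Real.cos (n * θ) * n) θ := by
    simpa [Function.comp_def] using (Real.hasDerivAt_sin ((n:ℝ) * θ)).comp θ ((hasDerivAt_id θ).const_mul (n:ℝ))
  have : HasDerivAt (fun t : ℝ => Real.sin (n * t))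
      (eval (Real.cos θ) (derivative p) * (-Real.sin θ) * Real.sin θ
        + eval (Real.cos θ) p * Real.cos θ) θ := by
    refine hf.congr_deriv rfl |>.congr_of_eventuallyEq ?_
    exact Filter.Eventually.of_forall fun t => (hfun t).symm
  rw [this.unique hg]; ring


/-- The barycentric weights at the Chebyshev points of the second kind
`s_k = cos(kπ/n)` are proportional to `(-1)^k δ_k`, with `δ_k = 1/2` at the
endpoints `k = 0, n` and `δ_k = 1` otherwise. -/
theorem chebyshev_barycentric_weights (n : ℕ) (hn : 1 ≤ n) :
    ∃ c : ℝ, c ≠ 0 ∧ ∀ k : Fin (n + 1),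
      (∏ j ∈ Finset.univ.erase k,
          (Real.cos ((k : ℕ) * Real.pi / n) - Real.cos ((j : ℕ) * Real.pi / n)))⁻¹
        = c * (-1) ^ (k : ℕ) *
            (if (k : ℕ) = 0 ∨ (k : ℕ) = n then (1 / 2 : ℝ) else 1) := by
  have hn0 : (n:ℝ) ≠ 0 := Nat.cast_ne_zero.mpr (by omega)
  have h2 : ((2:ℝ))^(n-1) ≠ 0 := by positivity
  refine ⟨2^(n-1) / n, by positivity, fun k => ?_⟩
  set v : Fin (n+1) → ℝ := fun k => Real.cos ((k:ℕ) * Real.pi / n) with hv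
  set θ := ((k:ℕ) * Real.pi / n) with hθ
  set s := Real.cos θ with hs
  set E := eval s (U ℝ ((n:ℤ)-1)) with hE
  set E' := eval s (derivative (U ℝ ((n:ℤ)-1))) with hE'
  set P := ∏ j ∈ Finset.univ.erase k, (Real.cos ((k:ℕ) * Real.pi / n) - Real.cos ((j:ℕ) * Real.pi / n)) with hPdef
  have hk : (k:ℕ) ≤ n := Nat.lt_succ_iff.mp k.isLt
  have hnθ : (n:ℝ) * θ = (k:ℕ) * Real.pi := by rw [hθ]; field_simp
  -- the derivative identity at node k
  have hderiv : 2 * s * E + (s^2 - 1) * E' = 2^(n-1) * P := by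
    have h := congrArg (fun p : ℝ[X] => eval s (derivative p)) (key_poly n hn)
    simp only [derivative_mul, derivative_C, zero_mul, zero_add, eval_mul, eval_add,
      eval_C] at h
    have hL : eval s (derivative ((X:ℝ[X])^2 - 1)) = 2 * s := by
      simp [derivative_sub]
      norm_num
    rw [hL] at h
    have hR : eval s (derivative (Lagrange.nodal univ v)) = P := by
      have h1 : s = v k := rfl
      rw [h1, Lagrange.eval_nodal_derivative_eval_node_eq (mem_univ k), Lagrange.eval_nodal]
    rw [hR] at h
    have : eval s ((X:ℝ[X])^2 - 1) = s^2 - 1 := by simp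
    rw [this] at h
    linarith [h]
  have hstar := star_identity n hn θ
  rw [hnθ] at hstar
  have hcoskπ : Real.cos ((k:ℕ) * Real.pi) = (-1)^(k:ℕ) := by
    simpa using Real.cos_nat_mul_pi_sub 0 (k:ℕ)
  rw [hcoskπ, ← hs, ← hE, ← hE'] at hstar
  -- hstar : E' * (-Real.sin θ) * Real.sin θ + E * s = n * (-1)^k
  -- compute P in each case
  by_cases hend : (k:ℕ) = 0 ∨ (k:ℕ) = n
  · rw [if_pos hend]
    rcases hend with h0 | hN
    · have hθ0 : θ = 0 := by rw [hθ, h0]; simp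
      have hsin : Real.sin θ = 0 := by rw [hθ0]; simp
      have hs1 : s = 1 := by rw [hs, hθ0]; simp
      rw [hsin, hs1, h0] at hstar
      simp only [mul_zero, zero_mul, neg_zero, zero_add, pow_zero, mul_one] at hstar
      -- hstar : E = n
      rw [hs1, hstar] at hderiv
      -- hderiv : 2 * 1 * n + (1^2 - 1) * E' = 2^(n-1) * P
      have hP : P = 2 * n / 2^(n-1) := by
        rw [eq_div_iff h2]; linarith
      rw [hP, h0]
      rw [inv_div]
      field_simp
    · have hθπ : θ = Real.pi := by rw [hθ, hN]; field_simp
      have hsin : Real.sin θ = 0 := by rw [hθπ]; exact Real.sin_pi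
      have hs1 : s = -1 := by rw [hs, hθπ]; simp
      rw [hsin, hs1, hN] at hstar
      simp only [mul_zero, zero_mul, neg_zero, zero_add, mul_neg_one] at hstar
      -- hstar : -E = n * (-1)^n
      rw [hs1] at hderiv
      have hP : P = 2 * n * (-1)^n / 2^(n-1) := by
        rw [eq_div_iff h2]; nlinarith [hstar, hderiv]
      rw [hP, hN]
      rcases Nat.even_or_odd n with he | ho
      · rw [he.neg_one_pow]
        rw [inv_div]
        field_simp
      · rw [ho.neg_one_pow]
        rw [inv_div]
        field_simp
  · push_neg at hend
    have hk1 : 1 ≤ (k:ℕ) := Nat.one_le_iff_ne_zero.mpr hend.1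
    have hklt : (k:ℕ) < n := lt_of_le_of_ne hk hend.2
    have hθpos : 0 < θ := by
      rw [hθ]
      have : (0:ℝ) < (k:ℕ) := by exact_mod_cast hk1
      positivity
    have hθlt : θ < Real.pi := by
      rw [hθ, div_lt_iff₀ (by positivity)]
      have : ((k:ℕ):ℝ) < n := by exact_mod_cast hklt
      nlinarith [Real.pi_pos]
    have hsin : 0 < Real.sin θ := Real.sin_pos_of_pos_of_lt_pi hθpos hθlt
    -- E = 0
    have hE0 : E = 0 := by
      have h1 := Polynomial.Chebyshev.U_real_cos θ ((n:ℤ) - 1)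
      have harg : ((((n:ℤ) - 1 : ℤ) : ℝ) + 1) * θ = (k:ℕ) * Real.pi := by
        push_cast; rw [hθ]; field_simp
        ring
      rw [harg, Real.sin_nat_mul_pi, ← hs, ← hE] at h1
      rcases mul_eq_zero.mp h1 with h | h
      · exact h
      · exact absurd h hsin.ne'
    have hs21 : s^2 - 1 = -(Real.sin θ)^2 := by
      have := Real.sin_sq_add_cos_sq θ
      rw [hs]; nlinarith
    rw [hE0] at hstar hderiv
    simp only [mul_zero, zero_mul, zero_add, add_zero] at hstar hderiv
    -- hstar : E' * (-sin θ) * sin θ = n * (-1)^k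
    -- hderiv : (s^2-1) * E' = 2^(n-1) * P
    rw [hs21] at hderiv
    have hP : P = (n:ℝ) * (-1)^(k:ℕ) / 2^(n-1) := by
      rw [eq_div_iff h2]
      nlinarith [hstar, hderiv]
    rw [hP, if_neg (by push_neg; exact ⟨hend.1, hend.2⟩), mul_one]
    rcases Nat.even_or_odd (k:ℕ) with he | ho
    · rw [he.neg_one_pow]; field_simp
    · rw [ho.neg_one_pow]
      rw [mul_neg_one, mul_neg_one, neg_div, inv_neg, neg_inj, inv_div]
      rw [eq_div_iff hn0] at *
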